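/- Let K be a field, let F ∈ K[x]^{m×n} have rank r, let s ∈ ℤ^m satisfy s ≥ rdeg(F) entrywise, and let Kb ∈ K[x]^{(m−r)×m} be an s-weak Popov basis of Ker(F). Then the sum of the entries of the s-row degree of Kb satisfies Σ rdeg_s(Kb) ≤ Σ s, where Σ s = s_1 + … + s_m. -/

import Mathlib

set_option maxHeartbeats 1600000
set_option synthInstance.maxHeartbeats 400000


open Polynomial Matrix

noncomputable section

variable {K : Type*} [Field K]

/-- Degree of a univariate polynomial, viewed in `ℤ ∪ {⊥}`. -/
def pdegZ (p : K[X]) : WithBot ℤ := p.degree.map (Nat.cast : ℕ → ℤ)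

/-- Shifted degree (`s`-degree) of a row vector. -/
def sdeg {n : ℕ} (s : Fin n → ℤ) (p : Fin n → K[X]) : WithBot ℤ :=
  Finset.univ.sup fun j => pdegZ (p j) + (s j : WithBot ℤ)

/-- `s`-leading matrix of `P`. -/
def leadMat {m n : ℕ} (s : Fin n → ℤ) (P : Matrix (Fin m) (Fin n) K[X]) :
    Matrix (Fin m) (Fin n) K :=
  Matrix.of fun i j =>
    if pdegZ (P i j) + (s j : WithBot ℤ) = sdeg s (P i) then (P i j).leadingCoeff else 0

/-- `P` is `s`-reduced: its `s`-leading matrix has full row rank. -/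
def IsShiftReduced {m n : ℕ} (s : Fin n → ℤ) (P : Matrix (Fin m) (Fin n) K[X]) : Prop :=
  (leadMat s P).rank = m

/-- `j` is the `s`-pivot index of the row `p`: the largest index where the `s`-degree is attained. -/
def IsPivotIndex {n : ℕ} (s : Fin n → ℤ) (p : Fin n → K[X]) (j : Fin n) : Prop :=
  pdegZ (p j) + (s j : WithBot ℤ) = sdeg s p ∧
  ∀ j', j < j' → pdegZ (p j') + (s j' : WithBot ℤ) ≠ sdeg s p

/-- `P` is in `s`-weak Popov form: no zero row and strictly increasing `s`-pivot indices. -/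
def IsWeakPopov {m n : ℕ} (s : Fin n → ℤ) (P : Matrix (Fin m) (Fin n) K[X]) : Prop :=
  (∀ i, P i ≠ 0) ∧ ∃ piv : Fin m → Fin n, StrictMono piv ∧ ∀ i, IsPivotIndex s (P i) (piv i)

/-- The rows of `Kb` form a basis of the left kernel of `F`. -/
def IsKernelBasis {ℓ m : ℕ} {β : Type*} [Fintype β]
    (Kb : Matrix (Fin ℓ) (Fin m) K[X]) (F : Matrix (Fin m) β K[X]) : Prop :=
  (∀ i, Kb i ᵥ* F = 0) ∧
  LinearIndependent K[X] (fun i : Fin ℓ => Kb i) ∧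
  ∀ p : Fin m → K[X], p ᵥ* F = 0 → ∃ u : Fin ℓ → K[X], p = u ᵥ* Kb

/-- Membership in the relation module `Rel_M(F)`. -/
def InRelModule {m n : ℕ} (M : Matrix (Fin n) (Fin n) K[X])
    (F : Matrix (Fin m) (Fin n) K[X]) (p : Fin m → K[X]) : Prop :=
  ∃ q : Fin n → K[X], p ᵥ* F = q ᵥ* M

/-- The rows of `A` form a basis of the relation module `Rel_M(F)`. -/
def IsRelationBasis {ℓ m n : ℕ} (M : Matrix (Fin n) (Fin n) K[X])
    (A : Matrix (Fin ℓ) (Fin m) K[X]) (F : Matrix (Fin m) (Fin n) K[X]) : Prop :=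
  (∀ i, InRelModule M F (A i)) ∧
  LinearIndependent K[X] (fun i : Fin ℓ => A i) ∧
  ∀ p : Fin m → K[X], InRelModule M F p → ∃ u : Fin ℓ → K[X], p = u ᵥ* A

/-- Rank of a polynomial matrix: its rank over the fraction field `K(x)`. -/
def polyRank {α β : Type*} [Fintype β] (F : Matrix α β K[X]) : ℕ :=
  (F.map (algebraMap K[X] (RatFunc K))).rank

/-- Lexicographic comparison of tuples. -/
def lexLE {r n : ℕ} (a b : Fin r → Fin n) : Prop :=
  ∀ i, (∀ k, k < i → a k = b k) → a i ≤ b i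

/-- `j` lists the column rank profile of `F`: the lexicographically smallest strictly
increasing tuple of `rank F` column indices selecting columns of full rank. -/
def IsColRankProfile {α : Type*} {n r : ℕ} (F : Matrix α (Fin n) K[X])
    (j : Fin r → Fin n) : Prop :=
  StrictMono j ∧ polyRank F = r ∧ polyRank (F.submatrix id j) = r ∧
  ∀ j' : Fin r → Fin n, StrictMono j' → polyRank (F.submatrix id j') = r → lexLE j j'


lemma pdegZ_zero : pdegZ (0 : K[X]) = ⊥ := by simp [pdegZ]

lemma pdegZ_eq_coe {p : K[X]} (hp : p ≠ 0) :
    pdegZ p = ((p.natDegree : ℤ) : WithBot ℤ) := by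
  rw [pdegZ, Polynomial.degree_eq_natDegree hp]
  rfl

lemma pdegZ_eq_bot_iff {p : K[X]} : pdegZ p = ⊥ ↔ p = 0 := by
  constructor
  · intro h
    by_contra hp
    rw [pdegZ_eq_coe hp] at h
    exact WithBot.coe_ne_bot h
  · intro h; simp [h, pdegZ_zero]

lemma pdegZ_mono {p q : K[X]} (h : p.degree ≤ q.degree) : pdegZ p ≤ pdegZ q := by
  unfold pdegZ
  exact (WithBot.map_le_iff _ (fun {a b} => Nat.cast_le)).mpr h

lemma le_sdeg {n : ℕ} (s : Fin n → ℤ) (p : Fin n → K[X]) (j : Fin n) :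
    pdegZ (p j) + (s j : WithBot ℤ) ≤ sdeg s p := by
  unfold sdeg
  exact Finset.le_sup (f := fun j => pdegZ (p j) + (s j : WithBot ℤ)) (Finset.mem_univ j)

lemma pivot_ne_zero {n : ℕ} {s : Fin n → ℤ} {p : Fin n → K[X]} {j : Fin n}
    (hpiv : IsPivotIndex s p j) (hp : p ≠ 0) : p j ≠ 0 := by
  intro h0
  obtain ⟨j', hj'0⟩ := Function.ne_iff.mp hp
  have hj' : p j' ≠ 0 := by simpa using hj'0
  have h1 : pdegZ (p j') + (s j' : WithBot ℤ) ≤ sdeg s p := le_sdeg s p j'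
  have h2 : sdeg s p = ⊥ := by
    rw [← hpiv.1, h0, pdegZ_zero, WithBot.bot_add]
  rw [h2, le_bot_iff] at h1
  rw [pdegZ_eq_coe hj'] at h1
  rw [← WithBot.coe_add] at h1
  exact WithBot.coe_ne_bot h1

lemma degree_intUnit_smul {u : ℤˣ} (p : K[X]) : (u • p).degree = p.degree := by
  rcases Int.units_eq_one_or u with h | h <;>
    simp [h, Units.smul_def, neg_zsmul, one_zsmul]

/-- Key strict degree comparison for non-identity permutations. -/
lemma offdiag_term_lt {ℓ m : ℕ} {s : Fin m → ℤ} {Kb : Matrix (Fin ℓ) (Fin m) K[X]}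
    (h0 : ∀ i, Kb i ≠ 0) {piv : Fin ℓ → Fin m} (hmono : StrictMono piv)
    (hpiv : ∀ i, IsPivotIndex s (Kb i) (piv i))
    (σ : Equiv.Perm (Fin ℓ)) (hσ : σ ≠ 1) :
    (∏ k, Kb (σ k) (piv k)).degree <
      ((∑ k, (Kb k (piv k)).natDegree : ℕ) : WithBot ℕ) := by
  by_cases hP : (∏ k, Kb (σ k) (piv k)) = 0
  · rw [hP, Polynomial.degree_zero]
    exact WithBot.bot_lt_coe _
  have hfac : ∀ k, Kb (σ k) (piv k) ≠ 0 := by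
    intro k
    exact Finset.prod_ne_zero_iff.mp hP k (Finset.mem_univ k)
  have hpivne : ∀ k, Kb k (piv k) ≠ 0 := fun k => pivot_ne_zero (hpiv k) (h0 k)
  -- termwise integer inequality
  have hterm : ∀ k, ((Kb (σ k) (piv k)).natDegree : ℤ) + s (piv k) ≤
      ((Kb (σ k) (piv (σ k))).natDegree : ℤ) + s (piv (σ k)) := by
    intro k
    have h1 : pdegZ (Kb (σ k) (piv k)) + (s (piv k) : WithBot ℤ) ≤ sdeg s (Kb (σ k)) :=
      le_sdeg s (Kb (σ k)) (piv k)
    have h2 : sdeg s (Kb (σ k)) =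
        pdegZ (Kb (σ k) (piv (σ k))) + (s (piv (σ k)) : WithBot ℤ) := ((hpiv (σ k)).1).symm
    rw [h2, pdegZ_eq_coe (hfac k), pdegZ_eq_coe (hpivne (σ k)),
      ← WithBot.coe_add, ← WithBot.coe_add, WithBot.coe_le_coe] at h1
    exact h1
  -- existence of a strictly decreasing point
  have hex : ∃ k, σ k < k := by
    by_contra hc
    push_neg at hc
    have hval : ∀ k : Fin ℓ, (k : ℕ) ≤ ((σ k : Fin ℓ) : ℕ) := fun k => hc k
    have hsum : ∑ k : Fin ℓ, ((σ k : Fin ℓ) : ℕ) = ∑ k : Fin ℓ, (k : ℕ) :=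
      Equiv.sum_comp σ (fun k : Fin ℓ => (k : ℕ))
    have := (Finset.sum_eq_sum_iff_of_le (fun i _ => hval i)).mp hsum.symm
    apply hσ
    ext k
    exact (this k (Finset.mem_univ k)).symm
  obtain ⟨k₀, hk₀⟩ := hex
  have hstrict : ((Kb (σ k₀) (piv k₀)).natDegree : ℤ) + s (piv k₀) <
      ((Kb (σ k₀) (piv (σ k₀))).natDegree : ℤ) + s (piv (σ k₀)) := by
    rcases lt_or_eq_of_le (hterm k₀) with h | h
    · exact h
    · exfalso
      apply (hpiv (σ k₀)).2 (piv k₀) (hmono hk₀)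
      rw [pdegZ_eq_coe (hfac k₀), ← WithBot.coe_add, h, WithBot.coe_add,
        ← pdegZ_eq_coe (hpivne (σ k₀))]
      exact (hpiv (σ k₀)).1
  have hsumlt : ∑ k, (((Kb (σ k) (piv k)).natDegree : ℤ) + s (piv k)) <
      ∑ k, (((Kb (σ k) (piv (σ k))).natDegree : ℤ) + s (piv (σ k))) :=
    Finset.sum_lt_sum (fun i _ => hterm i) ⟨k₀, Finset.mem_univ k₀, hstrict⟩
  have hreindex : ∑ k, (((Kb (σ k) (piv (σ k))).natDegree : ℤ) + s (piv (σ k))) =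
      ∑ k, (((Kb k (piv k)).natDegree : ℤ) + s (piv k)) :=
    Equiv.sum_comp σ (fun k => ((Kb k (piv k)).natDegree : ℤ) + s (piv k))
  rw [hreindex, Finset.sum_add_distrib, Finset.sum_add_distrib] at hsumlt
  have hZ : ∑ k, ((Kb (σ k) (piv k)).natDegree : ℤ) < ∑ k, ((Kb k (piv k)).natDegree : ℤ) :=
    lt_of_add_lt_add_right hsumlt
  have hN : ∑ k, (Kb (σ k) (piv k)).natDegree < ∑ k, (Kb k (piv k)).natDegree := by
    have : ((∑ k, (Kb (σ k) (piv k)).natDegree : ℕ) : ℤ) <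
        ((∑ k, (Kb k (piv k)).natDegree : ℕ) : ℤ) := by
      push_cast
      exact hZ
    exact_mod_cast this
  have hdeg : (∏ k, Kb (σ k) (piv k)).degree =
      ((∑ k, (Kb (σ k) (piv k)).natDegree : ℕ) : WithBot ℕ) := by
    rw [Polynomial.degree_eq_natDegree hP]
    rw [Polynomial.natDegree_prod _ _ (fun k _ => hfac k)]
  rw [hdeg]
  exact_mod_cast hN

/-- The pivot submatrix of a weak Popov matrix has nonzero determinant
with degree the sum of pivot degrees. -/
lemma weakPopov_det {ℓ m : ℕ} {s : Fin m → ℤ} {Kb : Matrix (Fin ℓ) (Fin m) K[X]}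
    (h0 : ∀ i, Kb i ≠ 0) {piv : Fin ℓ → Fin m} (hmono : StrictMono piv)
    (hpiv : ∀ i, IsPivotIndex s (Kb i) (piv i)) :
    (Kb.submatrix id piv).det ≠ 0 ∧
    ((Kb.submatrix id piv).det).natDegree = ∑ k, (Kb k (piv k)).natDegree := by
  set D : ℕ := ∑ k, (Kb k (piv k)).natDegree with hD
  have hpivne : ∀ k, Kb k (piv k) ≠ 0 := fun k => pivot_ne_zero (hpiv k) (h0 k)
  have hprodne : (∏ k, Kb k (piv k)) ≠ 0 := Finset.prod_ne_zero_iff.mpr (fun k _ => hpivne k)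
  have hproddeg : (∏ k, Kb k (piv k)).degree = (D : WithBot ℕ) := by
    rw [Polynomial.degree_eq_natDegree hprodne, Polynomial.natDegree_prod _ _ (fun k _ => hpivne k)]
  have hsplit : (Kb.submatrix id piv).det =
      (∏ k, Kb k (piv k)) + ∑ σ ∈ Finset.univ.erase (1 : Equiv.Perm (Fin ℓ)),
        Equiv.Perm.sign σ • ∏ k, (Kb.submatrix id piv) (σ k) k := by
    rw [Matrix.det_apply]
    rw [← Finset.add_sum_erase _ _ (Finset.mem_univ (1 : Equiv.Perm (Fin ℓ)))]
    simp [Matrix.submatrix_apply]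
  have hrest : (∑ σ ∈ Finset.univ.erase (1 : Equiv.Perm (Fin ℓ)),
      Equiv.Perm.sign σ • ∏ k, (Kb.submatrix id piv) (σ k) k).degree < (D : WithBot ℕ) := by
    apply lt_of_le_of_lt (Polynomial.degree_sum_le _ _)
    have hbot : (⊥ : WithBot ℕ) < (D : WithBot ℕ) := by
      exact_mod_cast WithBot.bot_lt_coe D
    rw [Finset.sup_lt_iff hbot]
    intro σ hσ
    rw [degree_intUnit_smul]
    have : ∀ k, (Kb.submatrix id piv) (σ k) k = Kb (σ k) (piv k) := fun k => rfl
    simp only [this]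
    exact offdiag_term_lt h0 hmono hpiv σ (Finset.ne_of_mem_erase hσ)
  have hdeg : ((Kb.submatrix id piv).det).degree = (D : WithBot ℕ) := by
    rw [hsplit, Polynomial.degree_add_eq_left_of_degree_lt (by rw [hproddeg]; exact hrest),
      hproddeg]
  have hne : (Kb.submatrix id piv).det ≠ 0 := by
    intro h
    rw [h, Polynomial.degree_zero] at hdeg
    exact (WithBot.bot_ne_coe hdeg)
  refine ⟨hne, ?_⟩
  have := Polynomial.degree_eq_natDegree hne
  rw [this] at hdeg
  exact_mod_cast hdeg

lemma pdegZ_mono' {a b : WithBot ℕ} (h : a ≤ b) :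
    a.map (Nat.cast : ℕ → ℤ) ≤ b.map (Nat.cast : ℕ → ℤ) :=
  (WithBot.map_le_iff _ (fun {a b} => Nat.cast_le)).mpr h

lemma pdegZ_mul (p q : K[X]) : pdegZ (p * q) = pdegZ p + pdegZ q := by
  rcases eq_or_ne p 0 with h | h
  · simp [h, pdegZ_zero]
  rcases eq_or_ne q 0 with h' | h'
  · simp [h', pdegZ_zero]
  rw [pdegZ_eq_coe h, pdegZ_eq_coe h', pdegZ_eq_coe (mul_ne_zero h h'),
    Polynomial.natDegree_mul h h', ← WithBot.coe_add]
  push_cast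
  rfl

lemma pdegZ_one : pdegZ (1 : K[X]) = 0 := by
  rw [pdegZ, Polynomial.degree_one]; rfl

lemma pdegZ_prod {ι : Type*} (t : Finset ι) (f : ι → K[X]) :
    pdegZ (∏ i ∈ t, f i) = ∑ i ∈ t, pdegZ (f i) := by
  induction t using Finset.cons_induction with
  | empty => simpa using pdegZ_one
  | cons a t ha ih => rw [Finset.prod_cons, Finset.sum_cons, pdegZ_mul, ih]

lemma pdegZ_sum_le_sup {ι : Type*} (t : Finset ι) (f : ι → K[X]) :
    pdegZ (∑ i ∈ t, f i) ≤ t.sup (fun i => pdegZ (f i)) := by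
  have h1 : pdegZ (∑ i ∈ t, f i) ≤ (t.sup fun i => (f i).degree).map (Nat.cast : ℕ → ℤ) :=
    pdegZ_mono' (Polynomial.degree_sum_le t f)
  refine le_trans h1 (le_of_eq ?_)
  rw [Finset.comp_sup_eq_sup_comp (fun a : WithBot ℕ => a.map (Nat.cast : ℕ → ℤ))]
  · rfl
  · intro a b
    rcases le_total a b with h | h
    · rw [sup_eq_right.mpr h, sup_eq_right.mpr (pdegZ_mono' h)]
    · rw [sup_eq_left.mpr h, sup_eq_left.mpr (pdegZ_mono' h)]
  · rfl

lemma pdegZ_det_le {k : Type*} [Fintype k] [DecidableEq k] (M : Matrix k k K[X]) (b : k → ℤ)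
    (hb : ∀ i j, pdegZ (M i j) ≤ ((b i : ℤ) : WithBot ℤ)) :
    pdegZ M.det ≤ ((∑ i, b i : ℤ) : WithBot ℤ) := by
  rw [Matrix.det_apply]
  refine le_trans (pdegZ_sum_le_sup _ _) (Finset.sup_le ?_)
  intro σ _
  have hsmul : pdegZ (Equiv.Perm.sign σ • ∏ i, M (σ i) i) = pdegZ (∏ i, M (σ i) i) := by
    unfold pdegZ
    rw [degree_intUnit_smul]
  rw [hsmul, pdegZ_prod]
  calc ∑ i, pdegZ (M (σ i) i) ≤ ∑ i, ((b (σ i) : ℤ) : WithBot ℤ) :=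
        Finset.sum_le_sum (fun i _ => hb (σ i) i)
    _ = ((∑ i, b (σ i) : ℤ) : WithBot ℤ) := (WithBot.coe_sum _ _).symm
    _ = ((∑ i, b i : ℤ) : WithBot ℤ) := by rw [Equiv.sum_comp σ b]

lemma exists_sum_equiv {ℓ r m : ℕ} (hm : ℓ + r = m) (T : Fin ℓ → Fin m)
    (hT : Function.Injective T) :
    ∃ e : (Fin ℓ ⊕ Fin r) ≃ Fin m, ∀ a, e (Sum.inl a) = T a := by
  classical
  set Tc : Finset (Fin m) := (Finset.univ.image T)ᶜ with hTc
  have hcard : Tc.card = r := by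
    rw [hTc, Finset.card_compl, Finset.card_image_of_injective _ hT]
    simp
    omega
  set f := Tc.orderIsoOfFin hcard with hf
  set gfun : (Fin ℓ ⊕ Fin r) → Fin m := Sum.elim T (fun u => (f u : Fin m)) with hgfun
  have hinj : Function.Injective gfun := by
    intro x y hxy
    rcases x with a | u <;> rcases y with a' | u'
    · simp only [hgfun, Sum.elim_inl] at hxy
      rw [hT hxy]
    · exfalso
      simp only [hgfun, Sum.elim_inl, Sum.elim_inr] at hxy
      have h1 : (f u' : Fin m) ∈ Tc := (f u').2
      rw [← hxy] at h1
      rw [hTc, Finset.mem_compl] at h1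
      exact h1 (Finset.mem_image_of_mem T (Finset.mem_univ a))
    · exfalso
      simp only [hgfun, Sum.elim_inl, Sum.elim_inr] at hxy
      have h1 : (f u : Fin m) ∈ Tc := (f u).2
      rw [hxy] at h1
      rw [hTc, Finset.mem_compl] at h1
      exact h1 (Finset.mem_image_of_mem T (Finset.mem_univ a'))
    · simp only [hgfun, Sum.elim_inr] at hxy
      have := f.injective (Subtype.ext hxy)
      rw [this]
  have hbij : Function.Bijective gfun := by
    rw [Fintype.bijective_iff_injective_and_card]
    refine ⟨hinj, ?_⟩
    simp [Fintype.card_sum, hm]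
  exact ⟨Equiv.ofBijective gfun hbij, fun a => rfl⟩

/-- Core duality lemma: if `Kb'` has identity `inl`-columns, `F'` has identity `inr`-rows,
and `Kb' * F' = 0`, then for any permutation `τ`, the `τ∘inl`-column minor of `Kb'` equals
(up to the sign of `τ`) the `τ∘inr`-row minor of `F'`. -/
lemma core_duality {L : Type*} [Field L] {k l : Type*} [Fintype k] [Fintype l]
    [DecidableEq k] [DecidableEq l]
    (Kb' : Matrix k (k ⊕ l) L) (F' : Matrix (k ⊕ l) l L)
    (h1 : ∀ a a', Kb' a (Sum.inl a') = (1 : Matrix k k L) a a')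
    (h2 : ∀ b b', F' (Sum.inr b) b' = (1 : Matrix l l L) b b')
    (h0 : Kb' * F' = 0) (τ : Equiv.Perm (k ⊕ l)) :
    Matrix.det (Matrix.of fun a a' => Kb' a (τ (Sum.inl a'))) =
      ((Equiv.Perm.sign τ : ℤ) : L) *
        Matrix.det (Matrix.of fun b b' => F' (τ (Sum.inr b)) b') := by
  classical
  set A : Matrix k k L := Matrix.of fun a a' => Kb' a (τ (Sum.inl a')) with hA
  set C : Matrix l l L := Matrix.of fun b b' => F' (τ (Sum.inr b)) b' with hC
  set Φ : Matrix (k ⊕ l) (k ⊕ l) L :=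
    Matrix.of (Sum.elim (fun a => Kb' a)
      (fun b j => if τ (Sum.inr b) = j then (1 : L) else 0)) with hΦ
  set Ψ : Matrix (k ⊕ l) (k ⊕ l) L :=
    Matrix.of (fun i => Sum.elim (fun a => if i = Sum.inl a then (1 : L) else 0)
      (fun b => F' i b)) with hΨ
  -- Step 1 : Φ.submatrix id τ is block upper triangular with A and 1 on the diagonal
  have hsub : Φ.submatrix id τ =
      Matrix.fromBlocks A (Matrix.of fun a b => Kb' a (τ (Sum.inr b))) 0 1 := by
    ext i j
    rcases i with a | b <;> rcases j with a' | b' <;>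
      simp only [Matrix.submatrix_apply, hΦ, Matrix.of_apply, Sum.elim_inl, Sum.elim_inr,
        Matrix.fromBlocks_apply₁₁, Matrix.fromBlocks_apply₁₂, Matrix.fromBlocks_apply₂₁,
        Matrix.fromBlocks_apply₂₂, hA, id_eq]
    · rw [if_neg]
      · rfl
      · intro h; exact Sum.inl_ne_inr (τ.injective h).symm
    · simp [τ.injective.eq_iff, Matrix.one_apply]
  have hdetsub : (Φ.submatrix id τ).det = A.det := by
    rw [hsub, Matrix.det_fromBlocks_zero₂₁, Matrix.det_one, mul_one]
  -- Step 2 : column permutation and sign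
  have hperm : (Φ.submatrix id τ).det = ((Equiv.Perm.sign τ : ℤ) : L) * Φ.det := by
    have h1' : (Φ.submatrix id τ) = (Φᵀ.submatrix τ id)ᵀ := by
      ext i j; simp [Matrix.submatrix_apply, Matrix.transpose_apply]
    rw [h1', Matrix.det_transpose]
    have := Matrix.det_permute τ Φᵀ
    rw [this, Matrix.det_transpose]
  -- Step 3 : Φ * Ψ is block lower triangular with 1 and C on the diagonal
  have hmul : Φ * Ψ =
      Matrix.fromBlocks 1 0
        (Matrix.of fun b a => if τ (Sum.inr b) = Sum.inl a then (1 : L) else 0) C := by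
    ext i j
    rcases i with a | b <;> rcases j with a' | b'
    · simp only [Matrix.mul_apply, hΦ, hΨ, Matrix.of_apply, Sum.elim_inl,
        Matrix.fromBlocks_apply₁₁]
      rw [Finset.sum_eq_single (Sum.inl a')]
      · simp [h1 a a']
      · intro j _ hj; simp [hj]
      · intro h; exact absurd (Finset.mem_univ _) h
    · simp only [Matrix.mul_apply, hΦ, hΨ, Matrix.of_apply, Sum.elim_inl, Sum.elim_inr,
        Matrix.fromBlocks_apply₁₂, Matrix.zero_apply]
      have := congrFun (congrFun h0 a) b'
      simpa [Matrix.mul_apply] using this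
    · simp only [Matrix.mul_apply, hΦ, hΨ, Matrix.of_apply, Sum.elim_inl, Sum.elim_inr,
        Matrix.fromBlocks_apply₂₁]
      rw [Finset.sum_eq_single (τ (Sum.inr b))]
      · simp
      · intro j _ hj; simp [Ne.symm hj]
      · intro h; exact absurd (Finset.mem_univ _) h
    · simp only [Matrix.mul_apply, hΦ, hΨ, Matrix.of_apply, Sum.elim_inr,
        Matrix.fromBlocks_apply₂₂, hC]
      rw [Finset.sum_eq_single (τ (Sum.inr b))]
      · simp
      · intro j _ hj; simp [Ne.symm hj]
      · intro h; exact absurd (Finset.mem_univ _) h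
  have hdetmul : (Φ * Ψ).det = C.det := by
    rw [hmul, Matrix.det_fromBlocks_zero₁₂, Matrix.det_one, one_mul]
  -- Step 4 : Ψ is block upper triangular with 1's on the diagonal
  have hΨdet : Ψ.det = 1 := by
    have : Ψ = Matrix.fromBlocks 1 (Matrix.of fun a b => F' (Sum.inl a) b) 0 1 := by
      ext i j
      rcases i with a | b <;> rcases j with a' | b' <;>
        simp [hΨ, Matrix.one_apply, Matrix.fromBlocks_apply₁₁, Matrix.fromBlocks_apply₁₂,
          Matrix.fromBlocks_apply₂₁, Matrix.fromBlocks_apply₂₂, h2, eq_comm]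
    rw [this, Matrix.det_fromBlocks_zero₂₁]
    simp
  have hΦC : Φ.det = C.det := by
    have := hdetmul
    rw [Matrix.det_mul, hΨdet, mul_one] at this
    exact this
  rw [← hdetsub, hperm, hΦC]

lemma exists_det_ne_zero_submatrix {L : Type*} [Field L] {k n : ℕ}
    (M : Matrix (Fin k) (Fin n) L) (h : LinearIndependent L (fun i => M i)) :
    ∃ c : Fin k → Fin n, Function.Injective c ∧ (M.submatrix id c).det ≠ 0 := by
  classical
  set colFun : Fin n → (Fin k → L) := fun j i => M i j with hcolFun
  -- columns span everything
  have hspan : Submodule.span L (Set.range colFun) = ⊤ := by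
    by_contra hW
    have hlt : Submodule.span L (Set.range colFun) < ⊤ := lt_top_iff_ne_top.mpr hW
    obtain ⟨f, hf0, hfmap⟩ :=
      Submodule.exists_dual_map_eq_bot_of_lt_top hlt inferInstance
    set u : Fin k → L := fun i => f (Pi.single i 1) with hu
    have hfx : ∀ x : Fin k → L, f x = ∑ i, x i * u i := by
      intro x
      conv_lhs => rw [pi_eq_sum_univ x]
      rw [map_sum]
      apply Finset.sum_congr rfl
      intro i _
      rw [f.map_smul, smul_eq_mul]
      congr 1
      have : (fun j => if i = j then (1 : L) else 0) = Pi.single i 1 := by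
        ext j
        simp [Pi.single_apply, eq_comm]
      rw [this]
    have hucol : ∀ j, ∑ i, M i j * u i = 0 := by
      intro j
      have hmem : colFun j ∈ Submodule.span L (Set.range colFun) :=
        Submodule.subset_span ⟨j, rfl⟩
      have : f (colFun j) = 0 := by
        have := Submodule.mem_map_of_mem (f := f) hmem
        rw [hfmap] at this
        exact (Submodule.mem_bot L).mp this
      rw [hfx] at this
      simpa [hcolFun] using this
    have hune : u ≠ 0 := by
      intro h0
      apply hf0
      apply LinearMap.ext
      intro x
      rw [hfx]
      simp [h0]
    have := Fintype.linearIndependent_iff.mp h u ?_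
    · apply hune; ext i; exact this i
    · ext j
      simpa [mul_comm] using hucol j
  obtain ⟨b, hbsub, hbspan, hbind⟩ := exists_linearIndependent L (Set.range colFun)
  haveI : Finite ↥b := hbind.finite
  haveI : Fintype ↥b := Fintype.ofFinite _
  have hbtop : Submodule.span L (Set.range (Subtype.val : b → (Fin k → L))) = ⊤ := by
    rw [Subtype.range_coe]
    rw [hbspan, hspan]
  let bas : Module.Basis b L (Fin k → L) := Module.Basis.mk hbind (le_of_eq hbtop.symm)
  have hcard : Fintype.card ↥b = k := by
    have h1 := Module.finrank_eq_card_basis bas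
    have h2 : Module.finrank L (Fin k → L) = k := by simp
    omega
  let eqv : Fin k ≃ ↥b := (Fintype.equivFinOfCardEq hcard).symm
  have hpick : ∀ x : ↥b, ∃ j, colFun j = (x : Fin k → L) := fun x => hbsub x.2
  set pick : ↥b → Fin n := fun x => Classical.choose (hpick x) with hpickdef
  have hpickspec : ∀ x : ↥b, colFun (pick x) = (x : Fin k → L) :=
    fun x => Classical.choose_spec (hpick x)
  refine ⟨pick ∘ eqv, ?_, ?_⟩
  · intro a a' haa'
    have : colFun (pick (eqv a)) = colFun (pick (eqv a')) := by
      simp only [Function.comp_apply] at haa'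
      rw [haa']
    rw [hpickspec, hpickspec] at this
    exact eqv.injective (Subtype.ext this)
  · intro hdet
    obtain ⟨v, hv0, hvz⟩ := Matrix.exists_mulVec_eq_zero_iff.mpr hdet
    have hindep : LinearIndependent L (fun j : Fin k => ((eqv j : ↥b) : Fin k → L)) :=
      hbind.comp eqv eqv.injective
    have hveq : ∀ j, v j = 0 := by
      apply Fintype.linearIndependent_iff.mp hindep v
      ext i
      have hthis : ∑ x : Fin k, M i ((pick ∘ ⇑eqv) x) * v x = 0 := by
        have := congrFun hvz i
        simp only [Matrix.mulVec, Matrix.submatrix_apply, dotProduct, id_eq,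
          Pi.zero_apply] at this
        exact this
      have heq : ∀ j : Fin k, ((eqv j : ↥b) : Fin k → L) i = M i (pick (eqv j)) := by
        intro j
        rw [← hpickspec (eqv j)]
      simp only [Finset.sum_apply, Pi.smul_apply, smul_eq_mul, Pi.zero_apply]
      rw [← hthis]
      apply Finset.sum_congr rfl
      intro j _
      rw [heq j, mul_comm]
      rfl
    apply hv0; ext j; exact hveq j


lemma exists_minor_not_dvd {ℓ m n' : ℕ} (Kb : Matrix (Fin ℓ) (Fin m) K[X])
    (F : Matrix (Fin m) (Fin n') K[X])
    (hKbind : LinearIndependent K[X] (fun i => Kb i))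
    (hker : ∀ p : Fin m → K[X], p ᵥ* F = 0 → ∃ u : Fin ℓ → K[X], p = u ᵥ* Kb)
    (hKbF : ∀ i, Kb i ᵥ* F = 0)
    {π : K[X]} (hπ : Irreducible π) :
    ∃ T : Fin ℓ → Fin m, Function.Injective T ∧ ¬ (π ∣ (Kb.submatrix id T).det) := by
  classical
  haveI hmax : (Ideal.span {π}).IsMaximal := PrincipalIdealRing.isMaximal_of_irreducible hπ
  letI : Field (K[X] ⧸ Ideal.span {π}) := Ideal.Quotient.field _
  set ψ : K[X] →+* K[X] ⧸ Ideal.span {π} := Ideal.Quotient.mk (Ideal.span {π}) with hψ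
  have hψker : ∀ x : K[X], ψ x = 0 ↔ π ∣ x := by
    intro x
    rw [hψ, Ideal.Quotient.eq_zero_iff_mem, Ideal.mem_span_singleton]
  have hind : LinearIndependent (K[X] ⧸ Ideal.span {π}) (fun i => (Kb.map ψ) i) := by
    rw [Fintype.linearIndependent_iff]
    intro cbar hcbar
    have hlift : ∀ k, ∃ x : K[X], ψ x = cbar k := fun k => Ideal.Quotient.mk_surjective (cbar k)
    choose u hu using hlift
    have hdvdall : ∀ j, π ∣ (∑ k, u k * Kb k j) := by
      intro j
      rw [← hψker]
      have := congrFun hcbar j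
      simp only [Finset.sum_apply, Pi.smul_apply, smul_eq_mul, Pi.zero_apply] at this
      rw [map_sum]
      rw [← this]
      apply Finset.sum_congr rfl
      intro k _
      rw [_root_.map_mul, hu k]
      rfl
    choose q hq using hdvdall
    have hqF : q ᵥ* F = 0 := by
      funext t
      have hπq : π * ((q ᵥ* F) t) = 0 := by
        have hcalc : π * ((q ᵥ* F) t) = ∑ k, u k * ((Kb k ᵥ* F) t) := by
          simp only [Matrix.vecMul, dotProduct, Finset.mul_sum]
          calc ∑ j, π * (q j * F j t)
              = ∑ j, ∑ k, u k * (Kb k j * F j t) := by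
                apply Finset.sum_congr rfl
                intro j _
                rw [← mul_assoc, ← hq j, Finset.sum_mul]
                apply Finset.sum_congr rfl
                intro k _
                ring
            _ = ∑ k, ∑ j, u k * (Kb k j * F j t) := Finset.sum_comm
        rw [hcalc]
        simp [hKbF]
      exact (mul_eq_zero.mp hπq).resolve_left hπ.ne_zero
    obtain ⟨u', hu'⟩ := hker q hqF
    have hzero : ∀ k, u k - π * u' k = 0 := by
      apply Fintype.linearIndependent_iff.mp hKbind
      funext j
      simp only [Finset.sum_apply, Pi.smul_apply, smul_eq_mul, Pi.zero_apply]
      have hqj : q j = ∑ k, u' k * Kb k j := by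
        have := congrFun hu' j
        simpa [Matrix.vecMul, dotProduct] using this
      have expand : ∑ k, (u k - π * u' k) * Kb k j
          = (∑ k, u k * Kb k j) - π * (∑ k, u' k * Kb k j) := by
        rw [Finset.mul_sum, ← Finset.sum_sub_distrib]
        apply Finset.sum_congr rfl
        intro k _
        ring
      rw [expand, ← hqj, hq j, sub_self]
    intro k
    have : ψ (u k) = 0 := by
      have h1 : u k = π * u' k := sub_eq_zero.mp (hzero k)
      rw [h1, _root_.map_mul]
      have : ψ π = 0 := (hψker π).mpr dvd_rfl
      rw [this, zero_mul]
    rw [← hu k]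
    exact this
  obtain ⟨T, hTinj, hTdet⟩ := exists_det_ne_zero_submatrix (Kb.map ψ) hind
  refine ⟨T, hTinj, ?_⟩
  intro hdvd
  apply hTdet
  have : (Kb.map ψ).submatrix id T = (Kb.submatrix id T).map ψ := by
    ext i j; simp [Matrix.submatrix_apply, Matrix.map_apply]
  rw [this]
  rw [show ((Kb.submatrix id T).map ψ) = ψ.mapMatrix (Kb.submatrix id T) from rfl,
    ← RingHom.map_det]
  exact (hψker _).mpr hdvd


/-- The sum of the `s`-row degrees of an `s`-weak Popov kernel basis is at most `Σ s`. -/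
theorem stmt10 {K : Type*} [Field K] {m n r : ℕ}
    (F : Matrix (Fin m) (Fin n) K[X]) (hF : polyRank F = r)
    (s : Fin m → ℤ) (hs : ∀ i, sdeg (0 : Fin n → ℤ) (F i) ≤ (s i : WithBot ℤ))
    (Kb : Matrix (Fin (m - r)) (Fin m) K[X]) (hkb : IsKernelBasis Kb F)
    (hwp : IsWeakPopov s Kb) :
    ∑ i, sdeg s (Kb i) ≤ ((∑ i, s i : ℤ) : WithBot ℤ) := by
  classical
  obtain ⟨h0, piv, hmono, hpiv⟩ := hwp
  have hsum' : (m - r) + (m - (m - r)) = m := by omega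
  obtain ⟨e, he⟩ := exists_sum_equiv hsum' piv hmono.injective
  set g := (Kb.submatrix id piv).det with hgdef
  obtain ⟨hgne, hgdeg⟩ := weakPopov_det h0 hmono hpiv
  set φ := algebraMap K[X] (RatFunc K) with hφdef
  have hφinj : Function.Injective φ := IsFractionRing.injective K[X] (RatFunc K)
  have hKbF : Kb * F = 0 := by
    apply Matrix.ext
    intro k t
    have := congrFun (hkb.1 k) t
    simpa [Matrix.mul_apply, Matrix.vecMul, dotProduct] using this
  have hQinj : ∀ u : Fin (m - r) → K[X], u ᵥ* (Kb.submatrix id piv) = 0 → u = 0 := by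
    intro u hu
    have h1 : u ᵥ* ((Kb.submatrix id piv) * (Kb.submatrix id piv).adjugate) = 0 := by
      rw [← Matrix.vecMul_vecMul, hu, Matrix.zero_vecMul]
    rw [Matrix.mul_adjugate] at h1
    funext k
    have h2 := congrFun h1 k
    simp only [Matrix.vecMul, dotProduct, Matrix.smul_apply, Matrix.one_apply, smul_eq_mul,
      mul_ite, mul_one, mul_zero, Finset.sum_ite_eq', Finset.mem_univ, if_true,
      Pi.zero_apply] at h2
    show u k = 0
    rcases mul_eq_zero.mp h2 with h | h
    · exact h
    · exact absurd h hgne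
  have hFI : LinearIndependent (RatFunc K)
      (fun u : Fin (m - (m - r)) => fun t : Fin n => φ (F (e (Sum.inr u)) t)) := by
    rw [Fintype.linearIndependent_iff]
    intro c hc
    by_contra hcne
    push_neg at hcne
    obtain ⟨u0, hu0⟩ := hcne
    obtain ⟨b, hb⟩ := IsLocalization.exist_integer_multiples
      (nonZeroDivisors K[X]) Finset.univ c
    choose p' hp' using fun u => hb u (Finset.mem_univ u)
    set p : Fin m → K[X] :=
      fun i => Sum.elim (fun _ => (0 : K[X])) p' (e.symm i) with hpdef
    have hpinl : ∀ a, p (e (Sum.inl a)) = 0 := by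
      intro a
      rw [hpdef]
      simp only [Equiv.symm_apply_apply, Sum.elim_inl]
    have hpinr : ∀ u, p (e (Sum.inr u)) = p' u := by
      intro u
      rw [hpdef]
      simp only [Equiv.symm_apply_apply, Sum.elim_inr]
    have hpF : p ᵥ* F = 0 := by
      funext t
      simp only [Pi.zero_apply]
      apply hφinj
      rw [map_zero]
      have hexp : φ ((p ᵥ* F) t) = ∑ i, φ (p i) * φ (F i t) := by
        simp only [Matrix.vecMul, dotProduct]
        rw [map_sum]
        exact Finset.sum_congr rfl (fun i _ => map_mul φ _ _)
      rw [hexp, ← Equiv.sum_comp e (fun i => φ (p i) * φ (F i t)), Fintype.sum_sum_type]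
      have hinl : ∀ a : Fin (m - r), φ (p (e (Sum.inl a))) * φ (F (e (Sum.inl a)) t) = 0 := by
        intro a
        rw [hpinl a, map_zero, zero_mul]
      have hinr : ∑ u : Fin (m - (m - r)), φ (p (e (Sum.inr u))) * φ (F (e (Sum.inr u)) t)
          = (b : K[X]) • ∑ u, c u * φ (F (e (Sum.inr u)) t) := by
        rw [Finset.smul_sum]
        apply Finset.sum_congr rfl
        intro u _
        rw [hpinr u, hp' u, Algebra.smul_def, Algebra.smul_def]
        ring
      rw [Finset.sum_congr rfl (fun a _ => hinl a), Finset.sum_const_zero, zero_add, hinr]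
      have hcz : ∑ u, c u * φ (F (e (Sum.inr u)) t) = 0 := by
        have := congrFun hc t
        simpa [Finset.sum_apply, smul_eq_mul] using this
      rw [hcz, smul_zero]
    obtain ⟨u, hu⟩ := hkb.2.2 p hpF
    have huQ : u ᵥ* (Kb.submatrix id piv) = 0 := by
      funext k
      have h1 : (u ᵥ* (Kb.submatrix id piv)) k = (u ᵥ* Kb) (piv k) := by
        simp [Matrix.vecMul, dotProduct, Matrix.submatrix_apply]
      rw [h1, ← congrFun hu (piv k), ← he k, hpinl k]
      rfl
    have hu0' : u = 0 := hQinj u huQ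
    have hp0 : p = 0 := by rw [hu, hu0', Matrix.zero_vecMul]
    have : (b : K[X]) • c u0 = 0 := by
      rw [← hp' u0, ← hpinr u0, hp0]
      simp
    rw [Algebra.smul_def] at this
    rcases mul_eq_zero.mp this with h | h
    · exact absurd (hφinj (by rw [h, map_zero] : φ (b : K[X]) = φ 0))
        (nonZeroDivisors.coe_ne_zero b)
    · exact hu0 h
  obtain ⟨C, hCinj, hCdet⟩ := exists_det_ne_zero_submatrix
      (Matrix.of fun (u : Fin (m - (m - r))) (t : Fin n) => φ (F (e (Sum.inr u)) t)) hFI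
  set Bm : Matrix (Fin (m - (m - r))) (Fin (m - (m - r))) K[X] :=
    Matrix.of (fun u t => F (e (Sum.inr u)) (C t)) with hBmdef
  set d := Bm.det with hddef
  have hφd : φ d ≠ 0 := by
    have hthis : φ d = ((Matrix.of fun (u : Fin (m - (m - r))) (t : Fin n) =>
        φ (F (e (Sum.inr u)) t)).submatrix id C).det := by
      rw [hddef, RingHom.map_det]
      congr 1
    rw [hthis]
    exact hCdet
  have hdne : d ≠ 0 := fun hh => hφd (by rw [hh, map_zero])
  have hdvd : ∀ T : Fin (m - r) → Fin m, Function.Injective T →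
      g ∣ d * (Kb.submatrix id T).det := by
    intro T hT
    obtain ⟨eT, heT⟩ := exists_sum_equiv hsum' T hT
    set KbL : Matrix (Fin (m - r)) (Fin m) (RatFunc K) := Kb.map φ with hKbL
    set QL : Matrix (Fin (m - r)) (Fin (m - r)) (RatFunc K) := KbL.submatrix id piv with hQL
    have hQLdet : QL.det = φ g := by
      rw [hgdef, RingHom.map_det]
      rfl
    have hφg : φ g ≠ 0 := fun hh => hgne (hφinj (by rw [hh, map_zero]))
    have hQLunit : IsUnit QL.det := by rw [hQLdet]; exact isUnit_iff_ne_zero.mpr hφg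
    set FCL : Matrix (Fin m) (Fin (m - (m - r))) (RatFunc K) := (F.submatrix id C).map φ
      with hFCL
    set BL : Matrix (Fin (m - (m - r))) (Fin (m - (m - r))) (RatFunc K) := Bm.map φ with hBL
    have hBLdet : BL.det = φ d := by
      rw [hddef, RingHom.map_det]
      rfl
    have hBLunit : IsUnit BL.det := by rw [hBLdet]; exact isUnit_iff_ne_zero.mpr hφd
    set Kb' : Matrix (Fin (m - r)) (Fin (m - r) ⊕ Fin (m - (m - r))) (RatFunc K) :=
      (QL⁻¹ * KbL).submatrix id e with hKb'
    set F' : Matrix (Fin (m - r) ⊕ Fin (m - (m - r))) (Fin (m - (m - r))) (RatFunc K) :=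
      (FCL * BL⁻¹).submatrix e id with hF'
    have h1 : ∀ a a', Kb' a (Sum.inl a') =
        (1 : Matrix (Fin (m - r)) (Fin (m - r)) (RatFunc K)) a a' := by
      intro a a'
      have e1 : Kb' a (Sum.inl a') = (QL⁻¹ * QL) a a' := by
        rw [hKb']
        simp only [Matrix.submatrix_apply, he, id_eq]
        rw [Matrix.mul_apply, Matrix.mul_apply]
        rfl
      rw [e1, Matrix.nonsing_inv_mul _ hQLunit]
    have h2 : ∀ b b', F' (Sum.inr b) b' =
        (1 : Matrix (Fin (m - (m - r))) (Fin (m - (m - r))) (RatFunc K)) b b' := by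
      intro b b'
      have e2 : F' (Sum.inr b) b' = (BL * BL⁻¹) b b' := by
        rw [hF']
        simp only [Matrix.submatrix_apply, id_eq]
        rw [Matrix.mul_apply, Matrix.mul_apply]
        rfl
      rw [e2, Matrix.mul_nonsing_inv _ hBLunit]
    have h00 : Kb' * F' = 0 := by
      rw [hKb', hF']
      rw [Matrix.submatrix_mul_equiv (QL⁻¹ * KbL) (FCL * BL⁻¹) id e id]
      have hmid : KbL * FCL = 0 := by
        rw [hKbL, hFCL, ← Matrix.map_mul]
        have hKbFC : Kb * (F.submatrix id C) = (Kb * F).submatrix id C := by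
          apply Matrix.ext; intro i j
          simp [Matrix.mul_apply, Matrix.submatrix_apply]
        rw [hKbFC, hKbF]
        apply Matrix.ext; intro i j
        simp
      have hassoc : (QL⁻¹ * KbL) * (FCL * BL⁻¹) = QL⁻¹ * (KbL * FCL) * BL⁻¹ := by
        rw [Matrix.mul_assoc, Matrix.mul_assoc, Matrix.mul_assoc]
      rw [hassoc, hmid, Matrix.mul_zero, Matrix.zero_mul]
      apply Matrix.ext; intro i j
      simp
    set τ : Equiv.Perm (Fin (m - r) ⊕ Fin (m - (m - r))) := eT.trans e.symm with hτ
    have hcore := core_duality Kb' F' h1 h2 h00 τ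
    have hLHS : (Matrix.of fun a a' => Kb' a (τ (Sum.inl a'))).det
        = QL⁻¹.det * φ ((Kb.submatrix id T).det) := by
      have hmat : (Matrix.of fun a a' => Kb' a (τ (Sum.inl a')))
          = QL⁻¹ * (KbL.submatrix id T) := by
        apply Matrix.ext; intro a a'
        rw [Matrix.of_apply, hKb']
        simp only [Matrix.submatrix_apply, hτ, Equiv.trans_apply, Equiv.apply_symm_apply,
          heT, id_eq]
        rw [Matrix.mul_apply, Matrix.mul_apply]
        rfl
      rw [hmat, Matrix.det_mul]
      congr 1
      rw [RingHom.map_det]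
      rfl
    have hRHS : (Matrix.of fun b b' => F' (τ (Sum.inr b)) b').det
        = φ ((F.submatrix (fun b => eT (Sum.inr b)) C).det) * BL⁻¹.det := by
      have hmat : (Matrix.of fun b b' => F' (τ (Sum.inr b)) b')
          = (FCL.submatrix (fun b => eT (Sum.inr b)) id) * BL⁻¹ := by
        apply Matrix.ext; intro b b'
        rw [Matrix.of_apply, hF']
        simp only [Matrix.submatrix_apply, hτ, Equiv.trans_apply, Equiv.apply_symm_apply,
          id_eq]
        rw [Matrix.mul_apply, Matrix.mul_apply]
        rfl
      rw [hmat, Matrix.det_mul]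
      congr 1
      rw [RingHom.map_det]
      rfl
    rw [hLHS, hRHS, Matrix.det_nonsing_inv, Matrix.det_nonsing_inv, hQLdet, hBLdet,
      Ring.inverse_eq_inv, Ring.inverse_eq_inv] at hcore
    set w := (Kb.submatrix id T).det with hw
    set v := (F.submatrix (fun b => eT (Sum.inr b)) C).det with hv
    set εK : K[X] := ((Equiv.Perm.sign τ : ℤ) : K[X]) with hε
    have hkey : d * w = εK * (g * v) := by
      apply hφinj
      rw [_root_.map_mul, _root_.map_mul, _root_.map_mul, hε, map_intCast]
      field_simp at hcore
      linear_combination hcore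
    exact ⟨εK * v, by rw [hkey]; ring⟩
  have hgdvd : g ∣ d := by
    set S : Finset (Fin (m - r) → Fin m) := Finset.univ.filter Function.Injective with hS
    have hwS : ∀ T ∈ S, Function.Injective T := fun T hTS => (Finset.mem_filter.mp hTS).2
    have hpivS : piv ∈ S := Finset.mem_filter.mpr ⟨Finset.mem_univ _, hmono.injective⟩
    set hgcd := S.gcd (fun T => (Kb.submatrix id T).det) with hh
    have hhdvdg : hgcd ∣ g := by
      rw [hgdef]
      exact Finset.gcd_dvd hpivS
    have hhne : hgcd ≠ 0 := by
      intro h0'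
      rw [h0', zero_dvd_iff] at hhdvdg
      exact hgne (by rw [← hgdef]; exact hhdvdg)
    have hunit : IsUnit hgcd := by
      by_contra hnu
      obtain ⟨π, hπ, hπdvd⟩ := WfDvdMonoid.exists_irreducible_factor hnu hhne
      obtain ⟨T, hTinj, hTnd⟩ := exists_minor_not_dvd Kb F hkb.2.1 hkb.2.2 hkb.1 hπ
      apply hTnd
      exact dvd_trans hπdvd
        (Finset.gcd_dvd (Finset.mem_filter.mpr ⟨Finset.mem_univ _, hTinj⟩))
    have hgall : g ∣ S.gcd (fun T => d * (Kb.submatrix id T).det) :=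
      Finset.dvd_gcd (fun T hTS => hdvd T (hwS T hTS))
    rw [Finset.gcd_mul_left] at hgall
    rcases hunit with ⟨uh, huh⟩
    rw [← hh, ← huh, Units.dvd_mul_right] at hgall
    exact dvd_normalize_iff.mp hgall
  -- final degree chase
  have hsd : ∀ k, sdeg s (Kb k) =
      ((((Kb k (piv k)).natDegree : ℤ) + s (piv k) : ℤ) : WithBot ℤ) := by
    intro k
    rw [← (hpiv k).1, pdegZ_eq_coe (pivot_ne_zero (hpiv k) (h0 k)), ← WithBot.coe_add]
  have hsum1 : ∑ k, sdeg s (Kb k) =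
      ((∑ k, (((Kb k (piv k)).natDegree : ℤ) + s (piv k)) : ℤ) : WithBot ℤ) := by
    rw [WithBot.coe_sum]
    exact Finset.sum_congr rfl (fun k _ => hsd k)
  have hdeg_gd : g.natDegree ≤ d.natDegree :=
    Polynomial.natDegree_le_natDegree (Polynomial.degree_le_of_dvd hgdvd hdne)
  have hdbound : (d.natDegree : ℤ) ≤ ∑ u : Fin (m - (m - r)), s (e (Sum.inr u)) := by
    have hpd : pdegZ d ≤ ((∑ u : Fin (m - (m - r)), s (e (Sum.inr u)) : ℤ) : WithBot ℤ) := by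
      rw [hddef]
      apply pdegZ_det_le
      intro u t
      have h1 := hs (e (Sum.inr u))
      have h2 := le_sdeg (0 : Fin n → ℤ) (F (e (Sum.inr u))) (C t)
      have h3 : pdegZ (Bm u t) + (((0 : Fin n → ℤ) (C t) : ℤ) : WithBot ℤ) ≤
          (s (e (Sum.inr u)) : WithBot ℤ) := le_trans h2 h1
      simpa [hBmdef] using h3
    rw [pdegZ_eq_coe hdne] at hpd
    exact_mod_cast hpd
  have hssplit : ∑ i, s i =
      (∑ k : Fin (m - r), s (e (Sum.inl k))) + (∑ u : Fin (m - (m - r)), s (e (Sum.inr u))) := by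
    rw [← Equiv.sum_comp e s, Fintype.sum_sum_type]
  rw [hsum1]
  apply WithBot.coe_le_coe.mpr
  have step1 : ∑ k, (((Kb k (piv k)).natDegree : ℤ) + s (piv k))
      = (g.natDegree : ℤ) + ∑ k, s (piv k) := by
    rw [Finset.sum_add_distrib, hgdeg]
    push_cast
    ring
  rw [step1, hssplit]
  have hpivs : ∑ k : Fin (m - r), s (piv k) = ∑ k : Fin (m - r), s (e (Sum.inl k)) := by
    apply Finset.sum_congr rfl
    intro k _
    rw [he k]
  rw [hpivs]
  have : (g.natDegree : ℤ) ≤ ∑ u : Fin (m - (m - r)), s (e (Sum.inr u)) :=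
    le_trans (by exact_mod_cast hdeg_gd) hdbound
  linarith [this]
  
end
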